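/- Let 0 < γ < 1 < β < α < 2^{1/γ−1}, and let x, y ∈ ℓ_γ with ‖x‖_{ℓ_γ} = 1. If the three points −2^{1/γ−1}x, 0, 2^{1/γ−1}x all lie in y + εB_{ℓ_γ} for some ε > 0, then ε ≥ B(α,β,γ) > 1, where B(α,β,γ) = min(β, (A(α,β,γ)/2)^{1/γ}) and A(α,β,γ) = 2(β/α)^γ + [(2^{1/γ−1}−α)^γ + (2^{1/γ−1}+α)^γ](1 − (β/α)^γ). -/

import Mathlib

noncomputable section

/-- Membership in the sequence space `ℓ_γ`. -/
def Memlg (γ : ℝ) (x : ℕ → ℝ) : Prop := Summable fun i => |x i| ^ γ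

/-- The `ℓ_γ` γ-norm. -/
def lgNorm (γ : ℝ) (x : ℕ → ℝ) : ℝ := (∑' i, |x i| ^ γ) ^ (1/γ)

/-- The constant `A(α,β,γ)`. -/
def Aconst (α β γ : ℝ) : ℝ :=
  2 * (β/α) ^ γ +
    (((2:ℝ) ^ (1/γ - 1) - α) ^ γ + ((2:ℝ) ^ (1/γ - 1) + α) ^ γ) * (1 - (β/α) ^ γ)

/-- The constant `B(α,β,γ)`. -/
def Bconst (α β γ : ℝ) : ℝ := min β ((Aconst α β γ / 2) ^ (1/γ))


open Real

lemma rpow_subadd {γ s t : ℝ} (hγ0 : 0 ≤ γ) (hγ1 : γ ≤ 1) (hs : 0 ≤ s) (ht : 0 ≤ t) :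
    (s + t) ^ γ ≤ s ^ γ + t ^ γ := by
  have h := NNReal.rpow_add_le_add_rpow (⟨s, hs⟩ : NNReal) (⟨t, ht⟩ : NNReal) hγ0 hγ1
  exact_mod_cast h

lemma rpow_subadd_strict {γ s t : ℝ} (hγ0 : 0 < γ) (hγ1 : γ < 1) (hs : 0 < s) (ht : 0 < t) :
    (s + t) ^ γ < s ^ γ + t ^ γ := by
  have hst : 0 < s + t := by linarith
  have e : ∀ u : ℝ, 0 < u → u ^ γ = u * u ^ (γ - 1) := by
    intro u hu
    calc u ^ γ = u ^ (1 + (γ - 1)) := by ring_nf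
    _ = u ^ (1:ℝ) * u ^ (γ - 1) := Real.rpow_add hu 1 (γ - 1)
    _ = u * u ^ (γ - 1) := by rw [Real.rpow_one]
  rw [e _ hst, e _ hs, e _ ht, add_mul]
  have h1 : (s + t) ^ (γ - 1) < s ^ (γ - 1) :=
    Real.rpow_lt_rpow_of_neg hs (by linarith) (by linarith)
  have h2 : (s + t) ^ (γ - 1) < t ^ (γ - 1) :=
    Real.rpow_lt_rpow_of_neg ht (by linarith) (by linarith)
  have := mul_lt_mul_of_pos_left h1 hs
  have := mul_lt_mul_of_pos_left h2 ht
  linarith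

lemma concave_pair {γ a b d : ℝ} (hγ0 : 0 < γ) (hγ1 : γ < 1)
    (hb : 0 ≤ b) (hbd : b ≤ d) (hda : d ≤ a) :
    (a - d) ^ γ + (a + d) ^ γ ≤ (a - b) ^ γ + (a + b) ^ γ := by
  rcases eq_or_lt_of_le (hb.trans hbd) with hd0 | hd0
  · have hb0 : b = 0 := le_antisymm (hbd.trans hd0.symm.le) hb
    rw [hb0, ← hd0]
  · set s : ℝ := (d + b) / (2 * d) with hs
    set r : ℝ := (d - b) / (2 * d) with hr
    have hcc := (Real.strictConcaveOn_rpow hγ0 hγ1).concaveOn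
    have h1 : (a - d) ∈ Set.Ici (0:ℝ) := by simp; linarith
    have h2 : (a + d) ∈ Set.Ici (0:ℝ) := by simp; linarith
    have hs0 : 0 ≤ s := div_nonneg (by linarith) (by linarith)
    have hr0 : 0 ≤ r := div_nonneg (by linarith) (by linarith)
    have hsr : s + r = 1 := by
      rw [hs, hr, ← add_div, div_eq_iff (mul_pos two_pos hd0).ne']; ring
    have hdsr : d * (s - r) = b := by
      rw [hs, hr, ← sub_div, mul_div_assoc', div_eq_iff (mul_pos two_pos hd0).ne']; ring
    have hrs : r + s = 1 := by linarith
    have k1 := hcc.2 h1 h2 hs0 hr0 hsr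
    have k2 := hcc.2 h1 h2 hr0 hs0 hrs
    simp only [smul_eq_mul] at k1 k2
    have e1 : s * (a - d) + r * (a + d) = a - b := by linear_combination a * hsr - hdsr
    have e2 : r * (a - d) + s * (a + d) = a + b := by linear_combination a * hsr + hdsr
    rw [e1] at k1
    rw [e2] at k2
    have key : (a - d) ^ γ + (a + d) ^ γ
        = (s * (a - d) ^ γ + r * (a + d) ^ γ) + (r * (a - d) ^ γ + s * (a + d) ^ γ) := by
      linear_combination (-((a - d) ^ γ + (a + d) ^ γ)) * hsr
    linarith [k1, k2, key.le]

lemma abs_id (γ : ℝ) (u v : ℝ) :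
    |u - v| ^ γ + |u + v| ^ γ = |(|u| - |v|)| ^ γ + (|u| + |v|) ^ γ := by
  rcases le_total 0 u with hu | hu <;> rcases le_total 0 v with hv | hv
  · rw [abs_of_nonneg hu, abs_of_nonneg hv, abs_of_nonneg (add_nonneg hu hv)]
  · rw [abs_of_nonneg hu, abs_of_nonpos hv,
      abs_of_nonneg (by linarith : (0:ℝ) ≤ u - v), sub_neg_eq_add, ← sub_eq_add_neg]
    exact add_comm _ _
  · rw [abs_of_nonpos hu, abs_of_nonneg hv,
      abs_of_nonpos (by linarith : u - v ≤ 0),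
      show -u - v = -(u + v) by ring, abs_neg, show -u + v = -(u - v) by ring]
    exact add_comm _ _
  · rw [abs_of_nonpos hu, abs_of_nonpos hv,
      abs_of_nonpos (by linarith : u + v ≤ 0),
      show -u - -v = -(u - v) by ring, abs_neg, show -u + -v = -(u + v) by ring]

lemma key_pointwise {γ α c M : ℝ} (hγ0 : 0 < γ) (hγ1 : γ < 1)
    (hα1 : 1 < α) (hαc : α < c) (hc2 : (2:ℝ) ^ γ * c ^ γ = 2)
    (hM : M = ((c - α) ^ γ + (c + α) ^ γ) / 2) (hM1 : 1 ≤ M)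
    {X Y : ℝ} (hX : 0 ≤ X) (hY : 0 ≤ Y) :
    2 * M * X ^ γ - (2 * M - 2) * min (X ^ γ) (Y ^ γ / α ^ γ) ≤
      (c * X + Y) ^ γ + |c * X - Y| ^ γ := by
  have hα0 : (0:ℝ) < α := by linarith
  have hc0 : (0:ℝ) < c := by linarith
  have hαγ : (0:ℝ) < α ^ γ := Real.rpow_pos_of_pos hα0 γ
  rcases le_or_gt (α * X) Y with h | h
  · -- case Y ≥ α X : min = X^γ, bound by 2 X^γ
    have hmin : min (X ^ γ) (Y ^ γ / α ^ γ) = X ^ γ := by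
      apply min_eq_left
      rw [le_div_iff₀ hαγ]
      calc X ^ γ * α ^ γ = (α * X) ^ γ := by
            rw [Real.mul_rpow hα0.le hX, mul_comm]
      _ ≤ Y ^ γ := Real.rpow_le_rpow (by positivity) h hγ0.le
    rw [hmin]
    have goal2 : 2 * X ^ γ ≤ (c * X + Y) ^ γ + |c * X - Y| ^ γ := by
      have h2X : 2 * X ^ γ = (2 * (c * X)) ^ γ := by
        rw [Real.mul_rpow (by norm_num) (by positivity),
          Real.mul_rpow hc0.le hX, ← mul_assoc, hc2]
      rw [h2X]
      rcases le_or_gt Y (c * X) with hYc | hYc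
      · have habs : |c * X - Y| = c * X - Y := abs_of_nonneg (by linarith)
        rw [habs]
        calc (2 * (c * X)) ^ γ = ((c * X + Y) + (c * X - Y)) ^ γ := by ring_nf
        _ ≤ (c * X + Y) ^ γ + (c * X - Y) ^ γ :=
            rpow_subadd hγ0.le hγ1.le (by positivity) (by linarith)
      · have : (2 * (c * X)) ^ γ ≤ (c * X + Y) ^ γ :=
          Real.rpow_le_rpow (by positivity) (by linarith) hγ0.le
        have hnn : 0 ≤ |c * X - Y| ^ γ := Real.rpow_nonneg (abs_nonneg _) γ
        linarith
    nlinarith [Real.rpow_nonneg hX γ]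
  · -- case Y < α X : min = Y^γ/α^γ, bound by 2 M X^γ via concavity
    have hX0 : 0 < X := by
      rcases hX.lt_or_eq with h' | h'
      · exact h'
      · exfalso; rw [← h'] at h; simp at h; linarith
    have hmin : min (X ^ γ) (Y ^ γ / α ^ γ) = Y ^ γ / α ^ γ := by
      apply min_eq_right
      rw [div_le_iff₀ hαγ]
      calc Y ^ γ ≤ (α * X) ^ γ := Real.rpow_le_rpow hY h.le hγ0.le
      _ = X ^ γ * α ^ γ := by rw [Real.mul_rpow hα0.le hX, mul_comm]
    rw [hmin]
    have hkar := concave_pair (a := c * X) (b := Y) (d := α * X) hγ0 hγ1 hY h.le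
      (by nlinarith)
    have e1 : c * X - α * X = (c - α) * X := by ring
    have e2 : c * X + α * X = (c + α) * X := by ring
    rw [e1, e2, Real.mul_rpow (by linarith) hX, Real.mul_rpow (by linarith) hX] at hkar
    have habs : |c * X - Y| = c * X - Y := abs_of_nonneg (by nlinarith)
    rw [habs]
    have hMX : 2 * M * X ^ γ ≤ (c * X - Y) ^ γ + (c * X + Y) ^ γ := by
      calc 2 * M * X ^ γ = (c - α) ^ γ * X ^ γ + (c + α) ^ γ * X ^ γ := by
            rw [hM]; ring
      _ ≤ _ := hkar
    have hd : 0 ≤ (2 * M - 2) * (Y ^ γ / α ^ γ) := mul_nonneg (by linarith) (by positivity)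
    linarith

theorem three_point_covering (γ β α : ℝ) (hγ0 : 0 < γ) (hγ1 : γ < 1)
    (hβ : 1 < β) (hβα : β < α) (hα : α < (2:ℝ) ^ (1/γ - 1))
    (x y : ℕ → ℝ) (hx : Memlg γ x) (hy : Memlg γ y) (hx1 : lgNorm γ x = 1)
    (ε : ℝ) (hε : 0 < ε)
    (h1 : lgNorm γ ((-((2:ℝ) ^ (1/γ - 1))) • x - y) ≤ ε)
    (h2 : lgNorm γ ((0 : ℕ → ℝ) - y) ≤ ε)
    (h3 : lgNorm γ (((2:ℝ) ^ (1/γ - 1)) • x - y) ≤ ε) :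
    Bconst α β γ ≤ ε ∧ 1 < Bconst α β γ := by
  have hx' : Summable fun i => |x i| ^ γ := hx
  have hy' : Summable fun i => |y i| ^ γ := hy
  set c : ℝ := (2:ℝ) ^ (1/γ - 1) with hcdef
  have hα1 : 1 < α := hβ.trans hβα
  have hα0 : (0:ℝ) < α := by linarith
  have hc0 : 0 < c := Real.rpow_pos_of_pos (by norm_num) _
  have hαγ : (0:ℝ) < α ^ γ := Real.rpow_pos_of_pos hα0 γ
  have hcγ : c ^ γ = (2:ℝ) ^ (1 - γ) := by
    rw [hcdef, ← Real.rpow_mul (by norm_num : (0:ℝ) ≤ 2)]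
    congr 1
    field_simp
  have hc2 : (2:ℝ) ^ γ * c ^ γ = 2 := by
    rw [hcγ, ← Real.rpow_add (by norm_num : (0:ℝ) < 2)]
    norm_num
  set M : ℝ := ((c - α) ^ γ + (c + α) ^ γ) / 2 with hMdef
  have hM1 : 1 < M := by
    have hsub := rpow_subadd_strict (s := c - α) (t := c + α) hγ0 hγ1
      (by linarith) (by linarith)
    have he : (c - α) + (c + α) = 2 * c := by ring
    rw [he, Real.mul_rpow (by norm_num) hc0.le, hc2] at hsub
    rw [hMdef]; linarith
  -- convert norm hypotheses to sums
  have hnonneg : ∀ z : ℕ → ℝ, 0 ≤ ∑' i, |z i| ^ γ :=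
    fun z => tsum_nonneg fun i => Real.rpow_nonneg (abs_nonneg _) _
  have pow_le : ∀ S : ℝ, 0 ≤ S → S ^ (1/γ) ≤ ε → S ≤ ε ^ γ := by
    intro S hS h
    have := Real.rpow_le_rpow (Real.rpow_nonneg hS _) h hγ0.le
    rwa [← Real.rpow_mul hS, one_div, inv_mul_cancel₀ hγ0.ne', Real.rpow_one] at this
  unfold lgNorm at h1 h2 h3 hx1
  -- x has total mass 1
  have hSx : ∑' i, |x i| ^ γ = 1 := by
    have h0 := hnonneg x
    have := congrArg (· ^ γ) hx1
    rwa [← Real.rpow_mul h0, one_div, inv_mul_cancel₀ hγ0.ne', Real.rpow_one,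
      Real.one_rpow] at this
  -- rewrite the three constraints
  have he1 : (fun i => |((-c) • x - y) i| ^ γ) = fun i => |c * x i + y i| ^ γ := by
    funext i
    congr 1
    simp only [Pi.sub_apply, Pi.smul_apply, smul_eq_mul]
    rw [show -c * x i - y i = -(c * x i + y i) by ring, abs_neg]
  have he2 : (fun i => |((0:ℕ → ℝ) - y) i| ^ γ) = fun i => |y i| ^ γ := by
    funext i
    simp
  have he3 : (fun i => |(c • x - y) i| ^ γ) = fun i => |c * x i - y i| ^ γ := by
    funext i
    simp only [Pi.sub_apply, Pi.smul_apply, smul_eq_mul]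
  rw [he1] at h1
  rw [he2] at h2
  rw [he3] at h3
  -- summability
  have hbound : ∀ (σ : ℝ) (i : ℕ), |σ| = 1 →
      |c * x i + σ * y i| ^ γ ≤ c ^ γ * |x i| ^ γ + |y i| ^ γ := by
    intro σ i hσ
    have h1' : |c * x i + σ * y i| ≤ c * |x i| + |y i| := by
      calc |c * x i + σ * y i| ≤ |c * x i| + |σ * y i| := abs_add_le _ _
      _ = c * |x i| + |y i| := by rw [abs_mul, abs_mul, hσ, abs_of_pos hc0, one_mul]
    calc |c * x i + σ * y i| ^ γ ≤ (c * |x i| + |y i|) ^ γ :=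
          Real.rpow_le_rpow (abs_nonneg _) h1' hγ0.le
    _ ≤ (c * |x i|) ^ γ + |y i| ^ γ :=
          rpow_subadd hγ0.le hγ1.le (by positivity) (abs_nonneg _)
    _ = c ^ γ * |x i| ^ γ + |y i| ^ γ := by
          rw [Real.mul_rpow hc0.le (abs_nonneg _)]
  have hsummajor : Summable fun i => c ^ γ * |x i| ^ γ + |y i| ^ γ :=
    (hx'.mul_left _).add hy'
  have hs1 : Summable fun i => |c * x i + y i| ^ γ := by
    apply Summable.of_nonneg_of_le (fun i => Real.rpow_nonneg (abs_nonneg _) _)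
      (fun i => ?_) hsummajor
    simpa using hbound 1 i (by norm_num)
  have hs3 : Summable fun i => |c * x i - y i| ^ γ := by
    apply Summable.of_nonneg_of_le (fun i => Real.rpow_nonneg (abs_nonneg _) _)
      (fun i => ?_) hsummajor
    have := hbound (-1) i (by norm_num)
    simpa [sub_eq_add_neg] using this
  have hS1 : ∑' i, |c * x i + y i| ^ γ ≤ ε ^ γ := pow_le _ (hnonneg _) (by
    simpa using h1)
  have hS3 : ∑' i, |c * x i - y i| ^ γ ≤ ε ^ γ := pow_le _ (hnonneg _) (by
    simpa using h3)
  have hSy : ∑' i, |y i| ^ γ ≤ ε ^ γ := pow_le _ (hnonneg _) (by simpa using h2)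
  -- the min function
  have hsm : Summable fun i => min (|x i| ^ γ) (|y i| ^ γ / α ^ γ) := by
    apply Summable.of_nonneg_of_le
      (fun i => le_min (Real.rpow_nonneg (abs_nonneg _) _)
        (div_nonneg (Real.rpow_nonneg (abs_nonneg _) _) hαγ.le))
      (fun i => min_le_left _ _) hx'
  set Smin : ℝ := ∑' i, min (|x i| ^ γ) (|y i| ^ γ / α ^ γ) with hSmindef
  have hSmin_nonneg : 0 ≤ Smin :=
    tsum_nonneg fun i => le_min (Real.rpow_nonneg (abs_nonneg _) _)
      (div_nonneg (Real.rpow_nonneg (abs_nonneg _) _) hαγ.le)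
  have hSmin : Smin ≤ ε ^ γ / α ^ γ := by
    have step1 : Smin ≤ ∑' i, |y i| ^ γ / α ^ γ :=
      Summable.tsum_le_tsum (fun i => min_le_right _ _) hsm (hy'.div_const _)
    have step2 : ∑' i, |y i| ^ γ / α ^ γ = (∑' i, |y i| ^ γ) / α ^ γ :=
      tsum_div_const
    rw [step2] at step1
    refine step1.trans ?_
    gcongr
  -- main summed inequality
  have hL : Summable fun i =>
      2 * M * |x i| ^ γ - (2 * M - 2) * min (|x i| ^ γ) (|y i| ^ γ / α ^ γ) :=
    (hx'.mul_left _).sub (hsm.mul_left _)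
  have hptw : ∀ i, 2 * M * |x i| ^ γ - (2 * M - 2) * min (|x i| ^ γ) (|y i| ^ γ / α ^ γ)
      ≤ |c * x i - y i| ^ γ + |c * x i + y i| ^ γ := by
    intro i
    have hk := key_pointwise (M := M) hγ0 hγ1 hα1 hα hc2 hMdef hM1.le
      (abs_nonneg (x i)) (abs_nonneg (y i))
    refine hk.trans_eq ?_
    rw [abs_id γ (c * x i) (y i), abs_mul, abs_of_pos hc0]
    exact add_comm _ _
  have hmain : 2 * M * (∑' i, |x i| ^ γ) - (2 * M - 2) * Smin ≤ 2 * ε ^ γ := by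
    have t1 := Summable.tsum_le_tsum hptw hL (hs3.add hs1)
    rw [Summable.tsum_sub (hx'.mul_left _) (hsm.mul_left _), tsum_mul_left,
      tsum_mul_left, Summable.tsum_add hs3 hs1] at t1
    rw [← hSmindef] at t1
    linarith
  rw [hSx, mul_one] at hmain
  -- constants
  have hk1 : (β/α) ^ γ < 1 :=
    Real.rpow_lt_one (by positivity) (by rw [div_lt_one hα0]; exact hβα) hγ0
  have hAe : Aconst α β γ = 2 * (β/α) ^ γ + (2 * M) * (1 - (β/α) ^ γ) := by
    rw [Aconst, ← hcdef, hMdef]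
    ring
  have hA2 : 1 < Aconst α β γ / 2 := by
    rw [hAe]
    nlinarith [mul_pos (sub_pos.2 hM1) (sub_pos.2 hk1)]
  have hB1 : 1 < Bconst α β γ := by
    rw [Bconst]
    refine lt_min hβ ?_
    rw [Real.one_lt_rpow_iff_of_pos (by linarith)]
    exact Or.inl ⟨hA2, by positivity⟩
  refine ⟨?_, hB1⟩
  rcases le_or_gt β ε with hcase | hcase
  · exact le_trans (min_le_left _ _) hcase
  · have hεγβ : ε ^ γ ≤ β ^ γ := Real.rpow_le_rpow hε.le hcase.le hγ0.le
    have hkeq : (β/α) ^ γ = β ^ γ / α ^ γ := Real.div_rpow (by linarith : (0:ℝ) ≤ β) hα0.le γ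
    have hSk : Smin ≤ β ^ γ / α ^ γ := by
      refine hSmin.trans ?_
      gcongr
    have h2M2 : (0:ℝ) ≤ 2 * M - 2 := by linarith
    have hprod := mul_le_mul_of_nonneg_left hSk h2M2
    have hAineq : Aconst α β γ / 2 ≤ ε ^ γ := by
      rw [hAe, hkeq]
      linarith only [hprod, hmain]
    have hfin := Real.rpow_le_rpow (by linarith) hAineq
      (by positivity : (0:ℝ) ≤ 1/γ)
    rw [← Real.rpow_mul hε.le, mul_one_div, div_self hγ0.ne', Real.rpow_one] at hfin
    exact le_trans (min_le_right _ _) hfin
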